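/- arXiv:1609.05191 — 4 statements merged into one kernel-verified Lean document; each statement's English description precedes it below -/
import Mathlib

section
/- Let p_a(z) = z^n + a_1 z^{n−1} + ⋯ + a_n be a monic polynomial of degree n with real coefficients. Suppose for every complex z with |z| = α (where 0 < α ≤ 1), the value p_a(z)/z^n lies in the set C = {w ∈ ℂ : Re(w) ≥ (1+τ₀)|Im(w)|} ∩ {w : τ₁ < Re(w) < τ₂} for some positive constants τ₀, τ₁, τ₂. Then every root of p_a has absolute value strictly less than α. -/
lemma reflect_eval_inv (n : ℕ) (p : Polynomial ℂ) (hdeg : p.natDegree ≤ n)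
    (u : ℂ) (hu : u ≠ 0) : (p.reflect n).eval u⁻¹ = p.eval u / u ^ n := by
  letI : Invertible u := invertibleOfNonzero hu
  have h := Polynomial.eval₂_reflect_mul_pow (RingHom.id ℂ) u n p hdeg
  have hinv : (⅟u : ℂ) = u⁻¹ := invOf_eq_inv u
  rw [hinv] at h
  simp only [Polynomial.eval₂_eq_eval_map, Polynomial.map_id] at h
  rw [eq_div_iff (pow_ne_zero n hu)]
  exact h

/-- If p is a monic real-coefficient polynomial of degree n such that p(z)/zⁿ lies in the
region C = {w : Re w ≥ (1+τ₀)|Im w|, τ₁ < Re w < τ₂} for all |z| = α, then all roots of p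
have absolute value strictly less than α. -/
theorem stmt2 (n : ℕ) (hn : 0 < n) (p : Polynomial ℂ)
    (hmonic : p.Monic) (hdeg : p.natDegree = n)
    (hreal : ∀ k, (p.coeff k).im = 0)
    (α τ₀ τ₁ τ₂ : ℝ) (hα : 0 < α) (hα1 : α ≤ 1)
    (h0 : 0 < τ₀) (h1 : 0 < τ₁) (h2 : 0 < τ₂)
    (hC : ∀ z : ℂ, ‖z‖ = α →
      (1 + τ₀) * |(p.eval z / z ^ n).im| ≤ (p.eval z / z ^ n).re ∧
      τ₁ < (p.eval z / z ^ n).re ∧ (p.eval z / z ^ n).re < τ₂) :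
    ∀ z : ℂ, p.eval z = 0 → ‖z‖ < α := by
  intro z hz
  by_contra hge
  push_neg at hge
  have hz0 : z ≠ 0 := by
    intro h
    rw [h] at hge
    simp at hge
    linarith
  set q : Polynomial ℂ := p.reflect n with hq
  -- max modulus: for all w in closed ball radius 1/α, ‖exp(-q w)‖ ≤ exp(-τ₁)
  have hdiff : Differentiable ℂ (fun w : ℂ => Complex.exp (-(q.eval w))) :=
    (q.differentiable.neg).cexp
  have hr : (0:ℝ) < 1/α := by positivity
  have key : ∀ w : ℂ, w ∈ Metric.closedBall (0:ℂ) (1/α) →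
      ‖Complex.exp (-(q.eval w))‖ ≤ Real.exp (-τ₁) := by
    intro w hw
    refine Complex.norm_le_of_forall_mem_frontier_norm_le
      (U := Metric.closedBall (0:ℂ) (1/α)) Metric.isBounded_closedBall hdiff.diffContOnCl ?_ ?_
    · intro u hu
      rw [frontier_closedBall _ (ne_of_gt hr)] at hu
      have huabs : ‖u‖ = 1/α := by
        simpa [Complex.dist_eq] using hu
      have hu0 : u ≠ 0 := by
        intro h; rw [h] at huabs; simp at huabs; rw [← huabs] at hr; simp at hr
      have hzb : ‖u⁻¹‖ = α := by
        rw [norm_inv, huabs]; field_simp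
      have hzb0 : u⁻¹ ≠ 0 := inv_ne_zero hu0
      have hqe : q.eval u = p.eval u⁻¹ / (u⁻¹) ^ n := by
        have := reflect_eval_inv n p hdeg.le u⁻¹ hzb0
        rwa [inv_inv] at this
      have hre := (hC u⁻¹ hzb).2.1
      rw [← hqe] at hre
      rw [Complex.norm_exp]
      apply Real.exp_le_exp.2
      simp only [Complex.neg_re]
      linarith
    · rwa [IsClosed.closure_eq Metric.isClosed_closedBall]
  -- apply at w = z⁻¹
  have hwball : z⁻¹ ∈ Metric.closedBall (0:ℂ) (1/α) := by
    simp only [Metric.mem_closedBall, Complex.dist_eq, sub_zero]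
    rw [norm_inv]
    rw [one_div]
    exact inv_anti₀ hα hge
  have hqz : q.eval z⁻¹ = 0 := by
    rw [reflect_eval_inv n p hdeg.le z hz0, hz, zero_div]
  have := key z⁻¹ hwball
  rw [hqz] at this
  simp at this
  have : (1:ℝ) ≤ Real.exp (-τ₁) := by simpa using this
  have h' : Real.exp (-τ₁) < 1 := by
    rw [← Real.exp_zero]
    exact Real.exp_lt_exp.2 (by linarith)
  linarith
end

section
/- Fix z ∈ ℂ and complex numbers s, p, ŝ, p̂ with p ≠ 0, p̂ ≠ 0. Define h = |ŝ/p̂ − s/p|². Then the directional derivative identity holds: (∂h/∂p̂)·(p̂ − p) + (∂h/∂ŝ)·(ŝ − s) = 2 Re(p/p̂) · |ŝ/p̂ − s/p|², where ∂h/∂ŝ = 2Re{(1/p̂)(ŝ/p̂ − s/p)*} and ∂h/∂p̂ = −2Re{(ŝ/p̂²)(ŝ/p̂ − s/p)*} are the Wirtinger-type real gradients with respect to the complex parameters ŝ and p̂. -/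
/-- The core algebraic identity for weak quasi-convexity of the idealized risk:
with D = ŝ/p̂ − s/p,
  −2 Re{(ŝ/p̂²)·D*·(p̂ − p)} + 2 Re{(1/p̂)·D*·(ŝ − s)} = 2 Re(p/p̂)·|D|². -/
theorem stmt8 (s p sh ph : ℂ) (hp : p ≠ 0) (hph : ph ≠ 0) :
    -(2 * ((sh / ph ^ 2) * (starRingEnd ℂ) (sh / ph - s / p) * (ph - p)).re)
      + 2 * ((1 / ph) * (starRingEnd ℂ) (sh / ph - s / p) * (sh - s)).re
      = 2 * (p / ph).re * ‖sh / ph - s / p‖ ^ 2 := by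
  set D := sh / ph - s / p with hD
  have key : -(sh / ph ^ 2 * (starRingEnd ℂ) D * (ph - p))
      + (1 / ph) * (starRingEnd ℂ) D * (sh - s)
      = (p / ph) * ((starRingEnd ℂ) D * D) := by
    have hcp : (starRingEnd ℂ) p ≠ 0 := by simpa using hp
    have hcph : (starRingEnd ℂ) ph ≠ 0 := by simpa using hph
    rw [hD]
    simp only [map_sub, map_div₀]
    field_simp
    ring
  have habs : ((starRingEnd ℂ) D * D) = (‖D‖ ^ 2 : ℝ) := by
    rw [mul_comm, Complex.mul_conj, Complex.sq_norm, Complex.normSq_eq_norm_sq]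
  have h2 : -((sh / ph ^ 2 * (starRingEnd ℂ) D * (ph - p)).re)
      + ((1 / ph) * (starRingEnd ℂ) D * (sh - s)).re
      = ((p / ph) * ((starRingEnd ℂ) D * D)).re := by
    rw [← key]; simp [Complex.add_re, Complex.neg_re]
  have h3 : ((p / ph) * ((starRingEnd ℂ) D * D)).re
      = (p / ph).re * ‖D‖ ^ 2 := by
    rw [habs, Complex.mul_re]
    simp [← Complex.ofReal_pow]
  linarith [h2, h3]
end

section
/- Let p(z) be a monic polynomial of degree n with distinct roots λ_1, ..., λ_n, all of absolute value at most α < 1, and let Γ = Σ_j |λ_j^n / ∏_{i≠j}(λ_i − λ_j)|. Then for every ζ > 0 there exists d = O(max{(1/(1−α)) · log(Γ/((1−α)ζ)), 0}) and a monic polynomial h(z) of degree d such that for all z with |z| = 1: |z^{n+d}/p(z) − h(z)| ≤ ζ. -/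
open Polynomial Finset

set_option maxHeartbeats 1000000

/-- Approximation of the inverse of a polynomial: for p monic of degree n with distinct
roots of modulus ≤ α < 1 and conditioning Γ = Σⱼ |λⱼⁿ/∏_{i≠j}(λᵢ−λⱼ)|, for every ζ > 0
there is a monic polynomial h of degree d = O(max{(1/(1−α))·log(Γ/((1−α)ζ)), 0}) with
|z^{n+d}/p(z) − h(z)| ≤ ζ on the unit circle. -/
theorem stmt12 : ∃ C : ℝ, 0 < C ∧
    ∀ (n : ℕ) (α : ℝ), 0 < n → 0 < α → α < 1 →
    ∀ lam : Fin n → ℂ, Function.Injective lam →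
    (∀ j, ‖lam j‖ ≤ α) →
    ∀ ζ : ℝ, 0 < ζ →
    ∃ (d : ℕ) (h : Polynomial ℂ), h.Monic ∧ h.natDegree = d ∧
      (d : ℝ) ≤ C * (max ((1 / (1 - α)) * Real.log
          ((∑ j, ‖lam j ^ n / ∏ i ∈ Finset.univ.erase j, (lam i - lam j)‖) /
            ((1 - α) * ζ))) 0 + 1) ∧
      ∀ z : ℂ, ‖z‖ = 1 →
        ‖z ^ (n + d) / ∏ j, (z - lam j) - h.eval z‖ ≤ ζ := by
  refine ⟨1, one_pos, ?_⟩
  intro n α hn hα hα1 lam hinj hbound ζ hζ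
  have h1α : 0 < 1 - α := by linarith
  set Γ : ℝ := ∑ j, ‖lam j ^ n / ∏ i ∈ Finset.univ.erase j, (lam i - lam j)‖
    with hΓdef
  have hΓ0 : 0 ≤ Γ := Finset.sum_nonneg fun j _ => norm_nonneg _
  set M : ℝ := (1 / (1 - α)) * Real.log (Γ / ((1 - α) * ζ)) with hMdef
  set d : ℕ := ⌈max M 0⌉₊ with hddef
  clear_value Γ M d
  set p : Polynomial ℂ := ∏ j, (X - C (lam j)) with hpdef
  have hpm : p.Monic := monic_prod_of_monic _ _ fun j _ => monic_X_sub_C (lam j)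
  have hpdeg : p.natDegree = n := by
    rw [hpdef, natDegree_prod_of_monic _ _ fun j _ => monic_X_sub_C (lam j)]
    simp
  have hXm : ((X : ℂ[X]) ^ (n + d)).Monic := monic_X_pow _
  have hle : p.degree ≤ ((X : ℂ[X]) ^ (n + d)).degree := by
    rw [degree_eq_natDegree hpm.ne_zero, degree_eq_natDegree hXm.ne_zero, hpdeg,
      natDegree_X_pow]
    exact_mod_cast Nat.le_add_right n d
  have hhm : ((X : ℂ[X]) ^ (n + d) /ₘ p).Monic := by
    rw [Monic, leadingCoeff_divByMonic_of_monic hpm hle]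
    exact hXm
  refine ⟨d, (X : ℂ[X]) ^ (n + d) /ₘ p, hhm, ?_, ?_, ?_⟩
  · rw [natDegree_divByMonic _ hpm, natDegree_X_pow, hpdeg, Nat.add_sub_cancel_left]
  · rw [one_mul, hddef]
    exact le_of_lt (Nat.ceil_lt_add_one (le_max_right _ _))
  intro z hz
  -- basic facts about the roots vs z
  have hzl : ∀ j, 1 - α ≤ ‖z - lam j‖ := by
    intro j
    have h1 := norm_sub_norm_le z (lam j)
    have h2 := hbound j
    linarith
  have hzne : ∀ j, z - lam j ≠ 0 := by
    intro j hc
    have := hzl j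
    rw [hc, norm_zero] at this
    linarith
  have hpzne : (∏ j, (z - lam j)) ≠ 0 := Finset.prod_ne_zero_iff.2 fun j _ => hzne j
  have hpz : p.eval z = ∏ j, (z - lam j) := by simp [hpdef, eval_prod]
  have hdiff : ∀ i j : Fin n, i ≠ j → lam j - lam i ≠ 0 := by
    intro i j hij hc
    exact hij (hinj (sub_eq_zero.mp hc)).symm
  set r : Polynomial ℂ := (X : ℂ[X]) ^ (n + d) %ₘ p with hrdef
  have hsum : r + p * ((X : ℂ[X]) ^ (n + d) /ₘ p) = (X : ℂ[X]) ^ (n + d) :=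
    modByMonic_add_div _ p
  have hrval : ∀ j, r.eval (lam j) = lam j ^ (n + d) := by
    intro j
    have h0 : p.eval (lam j) = 0 := by
      rw [hpdef, eval_prod]
      exact Finset.prod_eq_zero (mem_univ j) (by simp)
    have := congrArg (Polynomial.eval (lam j)) hsum
    simpa [h0] using this
  have hrdeg : r.degree < ((Finset.univ : Finset (Fin n)).card : ℕ) := by
    have h := degree_modByMonic_lt ((X : ℂ[X]) ^ (n + d)) hpm
    rw [degree_eq_natDegree hpm.ne_zero, hpdeg] at h
    simpa [card_univ] using h
  have hinterp := Lagrange.eq_interpolate (s := Finset.univ) (v := lam)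
    (Set.injOn_of_injective hinj) hrdeg
  have hre : r.eval z
      = ∑ j, lam j ^ (n + d) * ∏ i ∈ Finset.univ.erase j,
          ((lam j - lam i)⁻¹ * (z - lam i)) := by
    conv_lhs => rw [hinterp]
    simp [Lagrange.interpolate_apply, Lagrange.basis, Lagrange.basisDivisor, eval_finset_sum,
      eval_prod, hrval]
  have key : z ^ (n + d) / ∏ j, (z - lam j)
      - ((X : ℂ[X]) ^ (n + d) /ₘ p).eval z = r.eval z / ∏ j, (z - lam j) := by
    have hz2 := congrArg (Polynomial.eval z) hsum
    rw [eval_add, eval_mul, hpz, eval_pow, eval_X] at hz2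
    rw [show Polynomial.eval z r
        = z ^ (n + d) - (∏ j, (z - lam j)) * Polynomial.eval z ((X : ℂ[X]) ^ (n + d) /ₘ p) by
      linear_combination hz2, sub_div, mul_div_cancel_left₀ _ hpzne]
  have hfrac : r.eval z / ∏ j, (z - lam j)
      = ∑ j, lam j ^ (n + d) * (∏ i ∈ Finset.univ.erase j, (lam j - lam i))⁻¹
          * (z - lam j)⁻¹ := by
    rw [hre, Finset.sum_div]
    refine Finset.sum_congr rfl fun j _ => ?_
    rw [show (∏ j', (z - lam j')) = (z - lam j) * ∏ i ∈ Finset.univ.erase j, (z - lam i) from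
      (Finset.mul_prod_erase _ _ (mem_univ j)).symm]
    rw [Finset.prod_mul_distrib, Finset.prod_inv_distrib]
    have h2 : (∏ i ∈ Finset.univ.erase j, (z - lam i)) ≠ 0 :=
      Finset.prod_ne_zero_iff.2 fun i _ => hzne i
    rw [← mul_assoc, mul_div_mul_right _ _ h2, div_eq_mul_inv]
  rw [key, hfrac]
  -- bound each term
  have hterm : ∀ j : Fin n,
      ‖lam j ^ (n + d) * (∏ i ∈ Finset.univ.erase j, (lam j - lam i))⁻¹
        * (z - lam j)⁻¹‖
      ≤ α ^ d / (1 - α) *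
        ‖lam j ^ n / ∏ i ∈ Finset.univ.erase j, (lam i - lam j)‖ := by
    intro j
    have hP : (0:ℝ) < ∏ i ∈ Finset.univ.erase j, ‖lam j - lam i‖ :=
      Finset.prod_pos fun i hi =>
        (norm_pos_iff.2 (hdiff i j (Finset.ne_of_mem_erase hi)))
    have hPe : ∏ i ∈ Finset.univ.erase j, ‖lam i - lam j‖
        = ∏ i ∈ Finset.univ.erase j, ‖lam j - lam i‖ :=
      Finset.prod_congr rfl fun i _ => (norm_sub_rev _ _)
    have lhs_eq : ‖lam j ^ (n + d) * (∏ i ∈ Finset.univ.erase j, (lam j - lam i))⁻¹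
        * (z - lam j)⁻¹‖
        = ‖lam j‖ ^ (n + d) /
          ((∏ i ∈ Finset.univ.erase j, ‖lam j - lam i‖) *
            ‖z - lam j‖) := by
      rw [norm_mul, norm_mul, norm_inv, norm_inv, norm_pow, norm_prod, div_eq_mul_inv, mul_inv,
        ← mul_assoc]
    have rhs_eq : ‖lam j ^ n / ∏ i ∈ Finset.univ.erase j, (lam i - lam j)‖
        = ‖lam j‖ ^ n /
          (∏ i ∈ Finset.univ.erase j, ‖lam j - lam i‖) := by
      rw [norm_div, norm_pow, norm_prod, hPe]
    rw [lhs_eq, rhs_eq, div_mul_div_comm]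
    have hnum : ‖lam j‖ ^ (n + d) ≤ α ^ d * ‖lam j‖ ^ n := by
      rw [pow_add]
      calc ‖lam j‖ ^ n * ‖lam j‖ ^ d
          ≤ ‖lam j‖ ^ n * α ^ d :=
            mul_le_mul_of_nonneg_left
              (pow_le_pow_left₀ (norm_nonneg _) (hbound j) d) (by positivity)
        _ = α ^ d * ‖lam j‖ ^ n := mul_comm _ _
    have hden : (1 - α) * (∏ i ∈ Finset.univ.erase j, ‖lam j - lam i‖)
        ≤ (∏ i ∈ Finset.univ.erase j, ‖lam j - lam i‖)
          * ‖z - lam j‖ := by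
      rw [mul_comm (1 - α)]
      exact mul_le_mul_of_nonneg_left (hzl j) hP.le
    have pos1 : (0:ℝ) ≤ α ^ d * ‖lam j‖ ^ n := by positivity
    have pos2 : (0:ℝ) < (1 - α) * (∏ i ∈ Finset.univ.erase j, ‖lam j - lam i‖) :=
      mul_pos h1α hP
    exact div_le_div₀ pos1 hnum pos2 hden
  -- final numeric bound
  have hfinal : α ^ d * Γ ≤ (1 - α) * ζ := by
    rcases le_or_gt Γ ((1 - α) * ζ) with hc | hc
    · have h1 : α ^ d ≤ 1 := pow_le_one₀ hα.le hα1.le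
      nlinarith
    · have hΓpos : 0 < Γ := lt_trans (by positivity) hc
      have hLpos : 0 < Real.log (Γ / ((1 - α) * ζ)) :=
        Real.log_pos ((one_lt_div (by positivity)).mpr hc)
      have hdM : M ≤ (d : ℝ) := by
        rw [hddef]
        exact le_trans (le_max_left _ _) (Nat.le_ceil _)
      have hM' : Real.log (Γ / ((1 - α) * ζ)) ≤ (d : ℝ) * (1 - α) := by
        rw [hMdef] at hdM
        rw [div_mul_eq_mul_div, div_le_iff₀ h1α, one_mul] at hdM
        nlinarith
      have hlogα : Real.log α ≤ α - 1 := Real.log_le_sub_one_of_pos hα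
      have h2 : (d : ℝ) * Real.log α ≤ -Real.log (Γ / ((1 - α) * ζ)) := by
        have hd0 : (0:ℝ) ≤ (d : ℝ) := Nat.cast_nonneg _
        nlinarith
      have h3 : α ^ d ≤ (1 - α) * ζ / Γ := by
        calc α ^ d = Real.exp (Real.log α) ^ d := by rw [Real.exp_log hα]
          _ = Real.exp ((d : ℝ) * Real.log α) := by
              rw [← Real.exp_nat_mul]
          _ ≤ Real.exp (-Real.log (Γ / ((1 - α) * ζ))) := Real.exp_le_exp.mpr h2
          _ = (1 - α) * ζ / Γ := by
              rw [← Real.log_inv, Real.exp_log (by positivity), inv_div]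
      calc α ^ d * Γ ≤ (1 - α) * ζ / Γ * Γ := by
            exact mul_le_mul_of_nonneg_right h3 hΓ0
        _ = (1 - α) * ζ := div_mul_cancel₀ _ (ne_of_gt hΓpos)
  calc ‖∑ j, lam j ^ (n + d) *
        (∏ i ∈ Finset.univ.erase j, (lam j - lam i))⁻¹ * (z - lam j)⁻¹‖
      ≤ ∑ j, ‖lam j ^ (n + d) *
        (∏ i ∈ Finset.univ.erase j, (lam j - lam i))⁻¹ * (z - lam j)⁻¹‖ :=
        norm_sum_le _ _
    _ ≤ ∑ j, α ^ d / (1 - α) *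
        ‖lam j ^ n / ∏ i ∈ Finset.univ.erase j, (lam i - lam j)‖ :=
        Finset.sum_le_sum fun j _ => hterm j
    _ = α ^ d / (1 - α) * Γ := by rw [hΓdef, ← Finset.mul_sum]
    _ ≤ ζ := by
        rw [div_mul_eq_mul_div, div_le_iff₀ h1α]
        nlinarith
end

section
/- (Corollary of Bernstein's polynomial inequality) Let p(z) be a complex polynomial of degree at most n, and let m = 20n. Then sup_{|z|≤1} |p'(z)| ≤ 2n · max_{k∈[m]} |p(e^{2πik/m})|. -/
open Complex intervalIntegral Finset Polynomial

noncomputable def b17_cI (k : ℤ) (x : ℝ) : ℂ := Complex.exp ((k:ℂ) * (x:ℂ) * I)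

noncomputable def b17_gfun (n : ℕ) (p : Polynomial ℂ) (θ : ℝ) (j a b : ℕ) (t : ℝ) : ℂ :=
  p.coeff j * b17_cI ((n:ℤ) + a - b) θ * b17_cI ((j:ℤ) - ((n:ℤ) + a - b)) t

lemma b17_exp_merge (c A B C D E F : ℂ) (h : A + B + (C + D) = E + F) :
    c * Complex.exp A * Complex.exp B * (Complex.exp C * Complex.exp D)
      = c * Complex.exp E * Complex.exp F := by
  have h1 : c * Complex.exp A * Complex.exp B * (Complex.exp C * Complex.exp D)
      = c * Complex.exp (A + B + (C + D)) := by
    rw [Complex.exp_add, Complex.exp_add, Complex.exp_add]; ring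
  have h2 : c * Complex.exp E * Complex.exp F = c * Complex.exp (E + F) := by
    rw [Complex.exp_add]; ring
  rw [h1, h2, h]

lemma b17_cont_cI (w : ℂ) (k : ℤ) : Continuous (fun t : ℝ => w * b17_cI k t) := by
  unfold b17_cI
  apply continuous_const.mul
  exact Complex.continuous_exp.comp (by continuity)

lemma b17_int_cI (w : ℂ) (k : ℤ) :
    (∫ t in (0:ℝ)..(2*Real.pi), w * b17_cI k t)
      = if k = 0 then w * ((2*Real.pi : ℝ) : ℂ) else 0 := by
  unfold b17_cI
  rw [intervalIntegral.integral_const_mul]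
  have heq : ∀ t : ℝ, Complex.exp ((k:ℂ) * t * I) = Complex.exp ((k:ℂ) * I * t) := by
    intro t; ring_nf
  split_ifs with h
  · simp [h]
  · have hc : (k : ℂ) * I ≠ 0 := by
      simp only [mul_ne_zero_iff, I_ne_zero, and_true, ne_eq, Int.cast_eq_zero]
      exact ⟨h, not_false⟩
    have h2 := integral_exp_mul_complex (a := 0) (b := 2*Real.pi) hc
    simp only [heq, h2]
    have : Complex.exp ((k:ℂ) * I * (2*Real.pi)) = 1 := by
      rw [show (k:ℂ) * I * (2*Real.pi) = (k:ℤ) * (2 * Real.pi * I) by push_cast; ring]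
      exact Complex.exp_int_mul_two_pi_mul_I k
    simp [this]

lemma b17_count (n j : ℕ) (hj : j ≤ n) :
    ∑ a ∈ range n, ∑ b ∈ range n,
      (if ((j:ℤ) - ((n:ℤ) + a - b) = 0) then (1:ℂ) else 0) = j := by
  have h1 : ∀ a b : ℕ, (((j:ℤ) - ((n:ℤ) + a - b) = 0)) ↔ b = n + a - j := by
    intro a b; omega
  simp only [h1]
  have h2 : ∀ a : ℕ, (∑ b ∈ range n, if b = n + a - j then (1:ℂ) else 0)
      = if n + a - j ∈ range n then 1 else 0 := by
    intro a; exact Finset.sum_ite_eq' _ _ _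
  simp only [h2, Finset.mem_range]
  have h3 : ∀ a : ℕ, (n + a - j < n) ↔ a < j := by intro a; omega
  simp only [h3, Finset.sum_boole]
  have h4 : (range n).filter (fun a => a < j) = range j := by
    ext a; simp [Finset.mem_range]; omega
  rw [h4]; simp

lemma b17_zderiv (n : ℕ) (p : Polynomial ℂ) (hp : p.natDegree < n + 1) (z : ℂ) :
    ∑ j ∈ range (n+1), (j:ℂ) * p.coeff j * z^j
      = z * p.derivative.eval z := by
  have hd : p.derivative.natDegree < n + 1 :=
    lt_of_le_of_lt (Polynomial.natDegree_derivative_le p) (by omega)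
  rw [Polynomial.eval_eq_sum_range' hd, Finset.mul_sum]
  have hcoeff : p.coeff (n+1) = 0 := Polynomial.coeff_eq_zero_of_natDegree_lt hp
  have hL : ∑ j ∈ range (n+1), (j:ℂ) * p.coeff j * z^j
      = ∑ j ∈ range (n+2), (j:ℂ) * p.coeff j * z^j := by
    rw [show n + 2 = (n+1) + 1 by rfl, Finset.sum_range_succ (n := n+1), hcoeff]
    push_cast; ring
  rw [hL, Finset.sum_range_succ']
  simp only [Polynomial.coeff_derivative]
  push_cast
  rw [show (0:ℂ) * p.coeff 0 * z ^ 0 = 0 by ring, add_zero]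
  refine Finset.sum_congr rfl fun i _ => ?_
  rw [pow_succ]; ring

lemma b17_pointwise (n : ℕ) (p : Polynomial ℂ) (hp : p.natDegree < n + 1) (θ t : ℝ) :
    p.eval (Complex.exp ((t:ℂ) * I)) * Complex.exp ((n:ℂ) * ((θ - t : ℝ):ℂ) * I) *
      (((‖∑ a ∈ range n, Complex.exp ((a:ℂ) * ((θ - t : ℝ):ℂ) * I)‖)^2 : ℝ) : ℂ)
    = ∑ j ∈ range (n+1), ∑ a ∈ range n, ∑ b ∈ range n, b17_gfun n p θ j a b t := by
  unfold b17_gfun b17_cI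
  set D := ∑ a ∈ range n, Complex.exp ((a:ℂ) * ((θ - t : ℝ):ℂ) * I) with hD
  have habs : (((‖D‖)^2 : ℝ) : ℂ) = D * (starRingEnd ℂ) D := by
    rw [Complex.sq_norm, Complex.mul_conj]
  have hconj : (starRingEnd ℂ) D = ∑ b ∈ range n,
      Complex.exp (-((b:ℂ) * ((θ - t : ℝ):ℂ) * I)) := by
    rw [hD, map_sum]
    refine Finset.sum_congr rfl fun b _ => ?_
    rw [← Complex.exp_conj]
    congr 1
    simp [map_mul, Complex.conj_ofReal]
  rw [Polynomial.eval_eq_sum_range' hp, habs, hconj, hD, Finset.sum_mul_sum]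
  rw [Finset.sum_mul, Finset.sum_mul]
  refine Finset.sum_congr rfl fun j hj => ?_
  rw [Finset.mul_sum]
  refine Finset.sum_congr rfl fun a ha => ?_
  rw [Finset.mul_sum]
  refine Finset.sum_congr rfl fun b hb => ?_
  rw [show Complex.exp ((t:ℂ) * I) ^ j = Complex.exp ((j:ℂ) * ((t:ℂ) * I)) by
    rw [Complex.exp_nat_mul]]
  apply b17_exp_merge
  push_cast
  ring

lemma b17_int_gfun (n : ℕ) (p : Polynomial ℂ) (θ : ℝ) (j a b : ℕ) :
    (∫ t in (0:ℝ)..(2*Real.pi), b17_gfun n p θ j a b t)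
      = (p.coeff j * Complex.exp (((j:ℕ):ℂ) * (θ:ℂ) * I) * ((2*Real.pi : ℝ) : ℂ))
          * (if ((j:ℤ) - ((n:ℤ) + a - b) = 0) then (1:ℂ) else 0) := by
  unfold b17_gfun
  rw [b17_int_cI]
  split_ifs with h
  · have hc : ((n:ℤ) + a - b) = j := by omega
    rw [hc]
    unfold b17_cI
    push_cast
    ring
  · ring

lemma b17_lemB (n : ℕ) (p : Polynomial ℂ) (hp : p.natDegree < n + 1) (θ : ℝ) :
    (∫ t in (0:ℝ)..(2*Real.pi),
      p.eval (Complex.exp ((t:ℂ) * I)) * Complex.exp ((n:ℂ) * ((θ - t : ℝ):ℂ) * I) *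
        (((‖∑ a ∈ range n, Complex.exp ((a:ℂ) * ((θ - t : ℝ):ℂ) * I)‖)^2 : ℝ) : ℂ))
    = (2*Real.pi) * (Complex.exp ((θ:ℂ) * I) * p.derivative.eval (Complex.exp ((θ:ℂ) * I))) := by
  have hcont : ∀ (j a b : ℕ), Continuous (b17_gfun n p θ j a b) := by
    intro j a b
    have : b17_gfun n p θ j a b = fun t =>
        (p.coeff j * b17_cI ((n:ℤ) + a - b) θ) * b17_cI ((j:ℤ) - ((n:ℤ) + a - b)) t := by
      funext t; unfold b17_gfun; ring
    rw [this]
    exact b17_cont_cI _ _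
  have hint : ∀ (j a b : ℕ), IntervalIntegrable (b17_gfun n p θ j a b)
      MeasureTheory.volume 0 (2*Real.pi) := fun j a b =>
    (hcont j a b).intervalIntegrable _ _
  have h0 : (∫ t in (0:ℝ)..(2*Real.pi),
      p.eval (Complex.exp ((t:ℂ) * I)) * Complex.exp ((n:ℂ) * ((θ - t : ℝ):ℂ) * I) *
        (((‖∑ a ∈ range n, Complex.exp ((a:ℂ) * ((θ - t : ℝ):ℂ) * I)‖)^2 : ℝ) : ℂ))
      = ∫ t in (0:ℝ)..(2*Real.pi), ∑ j ∈ range (n+1), ∑ a ∈ range n, ∑ b ∈ range n,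
          b17_gfun n p θ j a b t :=
    intervalIntegral.integral_congr (fun t _ => b17_pointwise n p hp θ t)
  rw [h0]
  calc (∫ t in (0:ℝ)..(2*Real.pi), ∑ j ∈ range (n+1), ∑ a ∈ range n, ∑ b ∈ range n,
          b17_gfun n p θ j a b t)
      = ∑ j ∈ range (n+1), ∑ a ∈ range n, ∑ b ∈ range n,
          ∫ t in (0:ℝ)..(2*Real.pi), b17_gfun n p θ j a b t := by
        rw [intervalIntegral.integral_finset_sum
          (f := fun j t => ∑ a ∈ range n, ∑ b ∈ range n, b17_gfun n p θ j a b t)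
          (fun j _ => ((continuous_finset_sum _ fun a _ => continuous_finset_sum _
            fun b _ => hcont j a b)).intervalIntegrable _ _)]
        refine Finset.sum_congr rfl fun j _ => ?_
        rw [intervalIntegral.integral_finset_sum
          (f := fun a t => ∑ b ∈ range n, b17_gfun n p θ j a b t)
          (fun a _ => (continuous_finset_sum _ fun b _ => hcont j a b).intervalIntegrable _ _)]
        refine Finset.sum_congr rfl fun a _ => ?_
        exact intervalIntegral.integral_finset_sum
          (f := fun b t => b17_gfun n p θ j a b t) (fun b _ => hint j a b)
    _ = ∑ j ∈ range (n+1),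
        (p.coeff j * Complex.exp (((j:ℕ):ℂ) * (θ:ℂ) * I) * ((2*Real.pi : ℝ) : ℂ)) * (j:ℂ) := by
        refine Finset.sum_congr rfl fun j hj => ?_
        simp only [b17_int_gfun]
        simp only [← Finset.mul_sum]
        rw [b17_count n j (Nat.lt_succ_iff.mp (Finset.mem_range.mp hj))]
    _ = (2*Real.pi) * (Complex.exp ((θ:ℂ) * I) * p.derivative.eval (Complex.exp ((θ:ℂ) * I))) := by
        rw [← b17_zderiv n p hp (Complex.exp ((θ:ℂ) * I)), Finset.mul_sum]
        refine Finset.sum_congr rfl fun j _ => ?_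
        rw [show Complex.exp ((θ:ℂ) * I) ^ j = Complex.exp ((j:ℂ) * ((θ:ℂ) * I)) by
          rw [Complex.exp_nat_mul]]
        push_cast
        ring_nf

lemma b17_exp_merge2 (C D E F : ℂ) (h : C + D = E + F) :
    Complex.exp C * Complex.exp D = Complex.exp E * Complex.exp F := by
  rw [← Complex.exp_add, ← Complex.exp_add, h]

lemma b17_pointwise2 (n : ℕ) (θ t : ℝ) :
    (((‖∑ a ∈ range n, Complex.exp ((a:ℂ) * ((θ - t : ℝ):ℂ) * I)‖)^2 : ℝ) : ℂ)
    = ∑ a ∈ range n, ∑ b ∈ range n, b17_cI ((a:ℤ) - b) θ * b17_cI ((b:ℤ) - a) t := by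
  unfold b17_cI
  set D := ∑ a ∈ range n, Complex.exp ((a:ℂ) * ((θ - t : ℝ):ℂ) * I) with hD
  have habs : (((‖D‖)^2 : ℝ) : ℂ) = D * (starRingEnd ℂ) D := by
    rw [Complex.sq_norm, Complex.mul_conj]
  have hconj : (starRingEnd ℂ) D = ∑ b ∈ range n,
      Complex.exp (-((b:ℂ) * ((θ - t : ℝ):ℂ) * I)) := by
    rw [hD, map_sum]
    refine Finset.sum_congr rfl fun b _ => ?_
    rw [← Complex.exp_conj]
    congr 1
    simp [map_mul, Complex.conj_ofReal]
  rw [habs, hconj, hD, Finset.sum_mul_sum]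
  refine Finset.sum_congr rfl fun a _ => Finset.sum_congr rfl fun b _ => ?_
  apply b17_exp_merge2
  push_cast
  ring

lemma b17_lemC (n : ℕ) (θ : ℝ) :
    (∫ t in (0:ℝ)..(2*Real.pi),
      ((‖∑ a ∈ range n, Complex.exp ((a:ℂ) * ((θ - t : ℝ):ℂ) * I)‖)^2 : ℝ))
    = 2*Real.pi*n := by
  have hcpx : (∫ t in (0:ℝ)..(2*Real.pi),
      (((‖∑ a ∈ range n, Complex.exp ((a:ℂ) * ((θ - t : ℝ):ℂ) * I)‖)^2 : ℝ) : ℂ))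
      = ((2*Real.pi*n : ℝ) : ℂ) := by
    have h0 : (∫ t in (0:ℝ)..(2*Real.pi),
        (((‖∑ a ∈ range n, Complex.exp ((a:ℂ) * ((θ - t : ℝ):ℂ) * I)‖)^2 : ℝ) : ℂ))
        = ∫ t in (0:ℝ)..(2*Real.pi), ∑ a ∈ range n, ∑ b ∈ range n,
            b17_cI ((a:ℤ) - b) θ * b17_cI ((b:ℤ) - a) t :=
      intervalIntegral.integral_congr (fun t _ => b17_pointwise2 n θ t)
    rw [h0]
    rw [intervalIntegral.integral_finset_sum
      (f := fun (a : ℕ) t => ∑ b ∈ range n, b17_cI ((a:ℤ) - b) θ * b17_cI ((b:ℤ) - a) t)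
      (fun a _ => (continuous_finset_sum _ fun b _ => b17_cont_cI _ _).intervalIntegrable _ _)]
    have h1 : ∀ a ∈ range n, (∫ t in (0:ℝ)..(2*Real.pi),
        ∑ b ∈ range n, b17_cI ((a:ℤ) - b) θ * b17_cI ((b:ℤ) - a) t)
        = ∑ b ∈ range n, if ((b:ℤ) - a = 0) then b17_cI ((a:ℤ) - b) θ * ((2*Real.pi:ℝ):ℂ) else 0 := by
      intro a _
      rw [intervalIntegral.integral_finset_sum
        (f := fun (b : ℕ) t => b17_cI ((a:ℤ) - b) θ * b17_cI ((b:ℤ) - a) t)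
        (fun b _ => (b17_cont_cI _ _).intervalIntegrable _ _)]
      refine Finset.sum_congr rfl fun b _ => ?_
      rw [b17_int_cI]
    rw [Finset.sum_congr rfl h1]
    have h2 : ∀ a ∈ range n, (∑ b ∈ range n,
        if ((b:ℤ) - a = 0) then b17_cI ((a:ℤ) - b) θ * ((2*Real.pi:ℝ):ℂ) else 0)
        = ((2*Real.pi:ℝ):ℂ) := by
      intro a ha
      have hcond : ∀ b : ℕ, ((b:ℤ) - a = 0) ↔ b = a := by intro b; omega
      simp only [hcond]
      rw [Finset.sum_ite_eq' (range n) a]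
      simp only [if_pos ha, sub_self]
      unfold b17_cI
      simp
    rw [Finset.sum_congr rfl h2, Finset.sum_const, Finset.card_range]
    push_cast
    ring
  have := intervalIntegral.integral_ofReal
    (f := fun t => ((‖∑ a ∈ range n, Complex.exp ((a:ℂ) * ((θ - t : ℝ):ℂ) * I)‖)^2 : ℝ))
    (a := 0) (b := 2*Real.pi) (μ := MeasureTheory.volume)
  rw [this] at hcpx
  exact_mod_cast hcpx

lemma b17_bern (n : ℕ) (p : Polynomial ℂ) (hp : p.natDegree < n + 1) (S : ℝ)
    (hS : ∀ t : ℝ, ‖p.eval (Complex.exp ((t:ℂ) * I))‖ ≤ S) (θ : ℝ) :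
    ‖p.derivative.eval (Complex.exp ((θ:ℂ) * I))‖ ≤ n * S := by
  have hS0 : 0 ≤ S := le_trans (norm_nonneg _) (hS 0)
  set z := Complex.exp ((θ:ℂ) * I) with hz
  have hzabs : ‖z‖ = 1 := Complex.norm_exp_ofReal_mul_I θ
  have hK : ∀ s : ℝ, (0:ℝ) ≤ (‖∑ a ∈ range n, Complex.exp ((a:ℂ) * (s:ℂ) * I)‖)^2 :=
    fun s => sq_nonneg _
  have key := b17_lemB n p hp θ
  have hnorm : ‖(2*Real.pi : ℂ) * (z * p.derivative.eval z)‖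
      ≤ S * (2*Real.pi*n) := by
    rw [← key]
    have hb := intervalIntegral.norm_integral_le_of_norm_le
      (f := fun t => p.eval (Complex.exp ((t:ℂ) * I)) * Complex.exp ((n:ℂ) * ((θ - t : ℝ):ℂ) * I) *
        (((‖∑ a ∈ range n, Complex.exp ((a:ℂ) * ((θ - t : ℝ):ℂ) * I)‖)^2 : ℝ) : ℂ))
      (g := fun t => S * ((‖∑ a ∈ range n,
        Complex.exp ((a:ℂ) * ((θ - t : ℝ):ℂ) * I)‖)^2 : ℝ))
      (μ := MeasureTheory.volume) (a := 0) (b := 2*Real.pi)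
      ?_ ?_ ?_
    · refine le_trans hb ?_
      rw [intervalIntegral.integral_const_mul, b17_lemC n θ]
    · positivity
    · refine MeasureTheory.ae_of_all _ fun t _ => ?_
      rw [norm_mul, norm_mul]
      have h1 : ‖Complex.exp ((n:ℂ) * ((θ - t : ℝ):ℂ) * I)‖ = 1 := by
        rw [show (n:ℂ) * ((θ - t : ℝ):ℂ) * I = ((n * (θ - t) : ℝ):ℂ) * I by push_cast; ring]
        exact Complex.norm_exp_ofReal_mul_I _
      rw [h1, mul_one]
      have h2 : ‖(((‖∑ a ∈ range n,
          Complex.exp ((a:ℂ) * ((θ - t : ℝ):ℂ) * I)‖)^2 : ℝ) : ℂ)‖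
          = ((‖∑ a ∈ range n, Complex.exp ((a:ℂ) * ((θ - t : ℝ):ℂ) * I)‖)^2 : ℝ) := by
        rw [Complex.norm_real, Real.norm_of_nonneg (sq_nonneg _)]
      rw [h2]
      exact mul_le_mul_of_nonneg_right (hS t) (sq_nonneg _)
    · apply Continuous.intervalIntegrable
      apply continuous_const.mul
      apply Continuous.pow
      apply continuous_norm.comp
      apply continuous_finset_sum
      intro a _
      exact Complex.continuous_exp.comp (by continuity)
  have hexpand : ‖(2*Real.pi : ℂ) * (z * p.derivative.eval z)‖
      = (2*Real.pi) * ‖p.derivative.eval z‖ := by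
    have habs2pi : ‖(2:ℂ) * (Real.pi:ℂ)‖ = 2*Real.pi := by
      rw [norm_mul]
      simp [_root_.abs_of_nonneg Real.pi_pos.le]
    rw [norm_mul, habs2pi, norm_mul, hzabs, one_mul]
  rw [hexpand] at hnorm
  have hpi : (0:ℝ) < 2*Real.pi := Real.two_pi_pos
  nlinarith [norm_nonneg (p.derivative.eval z)]

lemma b17_gderiv (p : Polynomial ℂ) (t : ℝ) :
    HasDerivAt (fun t : ℝ => p.eval (Complex.exp ((t:ℂ) * I)))
      (Complex.exp ((t:ℂ) * I) * I * p.derivative.eval (Complex.exp ((t:ℂ) * I))) t := by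
  have h1 : HasDerivAt (fun t : ℝ => ((t : ℂ) * I)) I t := by
    simpa using (Complex.ofRealCLM.hasDerivAt (x := t)).mul_const I
  have h2 : HasDerivAt (fun t : ℝ => Complex.exp ((t:ℂ) * I))
      (Complex.exp ((t:ℂ) * I) * I) t := h1.cexp
  have h3 := (p.hasDerivAt (Complex.exp ((t:ℂ) * I))).comp t h2
  simpa [Function.comp_def, mul_comm, mul_assoc, mul_left_comm] using h3

lemma b17_bern_disk (n : ℕ) (p : Polynomial ℂ) (hp : p.natDegree < n + 1) (S : ℝ)
    (hS : ∀ t : ℝ, ‖p.eval (Complex.exp ((t:ℂ) * I))‖ ≤ S) :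
    ∀ z : ℂ, ‖z‖ ≤ 1 → ‖p.derivative.eval z‖ ≤ n * S := by
  intro z hz
  have hd : DiffContOnCl ℂ (fun w => p.derivative.eval w) (Metric.ball (0:ℂ) 1) :=
    (p.derivative.differentiable).diffContOnCl
  have key : ‖p.derivative.eval z‖ ≤ (n:ℝ) * S := by
    refine Complex.norm_le_of_forall_mem_frontier_norm_le (U := Metric.ball (0:ℂ) 1)
      Metric.isBounded_ball hd (fun w hw => ?_) ?_
    · rw [frontier_ball (0:ℂ) one_ne_zero] at hw
      have hw1 : ‖w‖ = 1 := by
        simpa [Complex.dist_eq] using hw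
      have hwe : w = Complex.exp ((Complex.arg w : ℂ) * I) := by
        conv_lhs => rw [← Complex.norm_mul_exp_arg_mul_I w]
        rw [hw1]
        simp
      rw [show ‖p.derivative.eval w‖ = ‖p.derivative.eval w‖ from rfl, hwe]
      exact b17_bern n p hp S hS (Complex.arg w)
    · rw [closure_ball (0:ℂ) one_ne_zero]
      simpa [Complex.dist_eq] using hz
  exact key

lemma b17_grid (m : ℕ) (hm : 0 < m) (θ : ℝ) :
    ∃ k : ℕ, k ∈ Finset.Icc 1 m ∧ ∃ θ' : ℝ, |θ - θ'| ≤ Real.pi/m ∧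
      Complex.exp ((θ':ℂ) * I) = Complex.exp (2 * Real.pi * Complex.I * k / m) := by
  have hπ : (0:ℝ) < Real.pi := Real.pi_pos
  have hm0 : (0:ℝ) < m := by exact_mod_cast hm
  set k' : ℤ := round (θ * m / (2*Real.pi)) with hk'
  have hmz : (m:ℤ) ≠ 0 := by exact_mod_cast hm.ne'
  have h1 : 0 ≤ k' % m := Int.emod_nonneg _ hmz
  have h2 : k' % m < m := Int.emod_lt_of_pos _ (by exact_mod_cast hm)
  have e := Int.emod_add_mul_ediv k' m
  obtain ⟨k, hkIcc, c, hc⟩ : ∃ k : ℕ, k ∈ Finset.Icc 1 m ∧ ∃ c : ℤ, (k:ℤ) = k' + c * m := by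
    by_cases h : k' % m = 0
    · exact ⟨m, Finset.mem_Icc.mpr ⟨hm, le_refl m⟩, 1 - k' / m,
        by push_cast; linear_combination e - h⟩
    · refine ⟨(k' % m).toNat, Finset.mem_Icc.mpr ⟨by omega, by omega⟩, - (k' / m), ?_⟩
      rw [Int.toNat_of_nonneg h1]
      linear_combination e
  refine ⟨k, hkIcc, 2*Real.pi*k'/m, ?_, ?_⟩
  · have hr : |θ * m / (2*Real.pi) - k'| ≤ 1/2 := abs_sub_round _
    have hdiff : θ - 2*Real.pi*k'/m = (θ * m / (2*Real.pi) - k') * (2*Real.pi/m) := by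
      field_simp
    rw [hdiff, abs_mul, abs_of_pos (by positivity : (0:ℝ) < 2*Real.pi/m)]
    calc |θ * m / (2*Real.pi) - k'| * (2*Real.pi/m) ≤ (1/2) * (2*Real.pi/m) :=
          mul_le_mul_of_nonneg_right hr (by positivity)
      _ = Real.pi/m := by ring
  · have hcC : ((k:ℕ):ℂ) = (k':ℂ) + (c:ℂ) * (m:ℂ) := by exact_mod_cast hc
    have hmC : ((m:ℕ):ℂ) ≠ 0 := by exact_mod_cast hm0.ne'
    have harg : (2 * (Real.pi:ℂ) * Complex.I * (k:ℕ) / (m:ℕ))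
        = ((2*Real.pi*k'/m : ℝ) : ℂ) * I + (c:ℤ) * (2*Real.pi*I) := by
      rw [hcC]
      push_cast
      field_simp
    rw [harg, Complex.exp_add, Complex.exp_int_mul_two_pi_mul_I, mul_one]

lemma b17_hosc_lemma (n : ℕ) (p : Polynomial ℂ) (hp : p.natDegree < n + 1) (S : ℝ)
    (hS : ∀ t : ℝ, ‖p.eval (Complex.exp ((t:ℂ) * I))‖ ≤ S) (θ θ' : ℝ) :
    ‖p.eval (Complex.exp ((θ:ℂ)*I)) - p.eval (Complex.exp ((θ':ℂ)*I))‖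
      ≤ (n*S) * |θ - θ'| := by
  have hbound : ∀ x ∈ (Set.univ : Set ℝ),
      ‖Complex.exp ((x:ℂ)*I) * I * p.derivative.eval (Complex.exp ((x:ℂ)*I))‖ ≤ n * S := by
    intro x _
    rw [norm_mul, norm_mul]
    rw [show ‖Complex.exp ((x:ℂ)*I)‖ = 1 from Complex.norm_exp_ofReal_mul_I x]
    rw [show ‖(I:ℂ)‖ = 1 from Complex.norm_I]
    simpa using b17_bern n p hp S hS x
  have := Convex.norm_image_sub_le_of_norm_hasDerivWithin_le
    (f := fun t : ℝ => p.eval (Complex.exp ((t:ℂ)*I)))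
    (f' := fun t : ℝ => Complex.exp ((t:ℂ)*I) * I * p.derivative.eval (Complex.exp ((t:ℂ)*I)))
    (C := n*S) (s := Set.univ)
    (fun x _ => (b17_gderiv p x).hasDerivWithinAt) hbound convex_univ
    (Set.mem_univ θ') (Set.mem_univ θ)
  simpa [Real.norm_eq_abs] using this

/-- Corollary of Bernstein's polynomial inequality: for a polynomial p of degree ≤ n and
the grid of m = 20n equispaced points on the unit circle,
sup_{|z|≤1} |p'(z)| ≤ 2n · max_{k∈[m]} |p(e^{2πik/m})|. -/
theorem stmt17 (n : ℕ) (hn : 0 < n) (p : Polynomial ℂ) (hdeg : p.natDegree ≤ n)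
    (M : ℝ)
    (hM : ∀ k ∈ Finset.Icc 1 (20 * n),
      ‖p.eval (Complex.exp (2 * Real.pi * Complex.I * k / (20 * n)))‖ ≤ M) :
    ∀ z : ℂ, ‖z‖ ≤ 1 →
      ‖p.derivative.eval z‖ ≤ 2 * n * M := by
  intro z hz
  have hp : p.natDegree < n + 1 := Nat.lt_succ_of_le hdeg
  have hm : 0 < 20 * n := by omega
  have hπ : (0:ℝ) < Real.pi := Real.pi_pos
  -- sup on the circle
  obtain ⟨w, hwmem, hwmax⟩ := (isCompact_sphere (0:ℂ) 1).exists_isMaxOn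
    ⟨1, by simp⟩ ((continuous_norm.comp p.continuous).continuousOn)
  rw [isMaxOn_iff] at hwmax
  set S := ‖p.eval w‖ with hSdef
  have hS : ∀ t : ℝ, ‖p.eval (Complex.exp ((t:ℂ)*I))‖ ≤ S := by
    intro t
    exact hwmax _ (by simp [Complex.norm_exp_ofReal_mul_I])
  have hS0 : 0 ≤ S := norm_nonneg _
  have hM0 : 0 ≤ M :=
    le_trans (norm_nonneg _) (hM 1 (Finset.mem_Icc.mpr ⟨le_refl 1, by omega⟩))
  -- S ≤ M + (π/20) S
  have hw1 : ‖w‖ = 1 := by simpa using hwmem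
  have hwe : w = Complex.exp ((Complex.arg w : ℂ) * I) := by
    conv_lhs => rw [← Complex.norm_mul_exp_arg_mul_I w]
    rw [hw1]; simp
  obtain ⟨k, hkIcc, θ', hθ', hexp⟩ := b17_grid (20*n) hm (Complex.arg w)
  have hgrid : ‖p.eval (Complex.exp ((θ':ℂ)*I))‖ ≤ M := by
    rw [hexp]
    have hcast : ((20*n : ℕ) : ℂ) = 20 * (n:ℂ) := by push_cast; ring
    rw [show (2 * (Real.pi:ℂ) * Complex.I * (k:ℕ) / ((20*n : ℕ):ℂ))
        = 2 * (Real.pi:ℂ) * Complex.I * (k:ℕ) / (20 * (n:ℂ)) by rw [hcast]]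
    exact hM k hkIcc
  have hosc := b17_hosc_lemma n p hp S hS (Complex.arg w) θ'
  have hstep : S ≤ M + (n*S) * (Real.pi/(20*n)) := by
    have htri : S ≤ ‖p.eval (Complex.exp (((Complex.arg w : ℝ):ℂ)*I))
        - p.eval (Complex.exp ((θ':ℂ)*I))‖ + ‖p.eval (Complex.exp ((θ':ℂ)*I))‖ := by
      rw [hSdef]
      conv_lhs => rw [hwe]
      exact le_trans (by rw [sub_add_cancel]) (norm_add_le _ _)
    have h2 : (n*S) * |Complex.arg w - θ'| ≤ (n*S) * (Real.pi/(20*n)) := by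
      apply mul_le_mul_of_nonneg_left _ (by positivity)
      calc |Complex.arg w - θ'| ≤ Real.pi/((20*n : ℕ):ℝ) := hθ'
        _ = Real.pi/(20*n) := by push_cast; ring
    linarith [le_trans htri (add_le_add (le_trans hosc h2) hgrid)]
  have hn' : (0:ℝ) < n := by exact_mod_cast hn
  have hSS : (n*S) * (Real.pi/(20*n)) = S * (Real.pi/20) := by
    field_simp
  rw [hSS] at hstep
  have hπ4 : Real.pi ≤ 4 := Real.pi_le_four
  have hS2M : S ≤ 2 * M := by nlinarith
  have hfinal := b17_bern_disk n p hp S hS z hz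
  nlinarith
end
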